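/- Let X be a measure space with probability measure λ, β > 0, and H : X → ℝ measurable with e^{-βH} ∈ L¹(λ). Define the Gibbs free energy F_β(H) = −β^{-1} log ∫ e^{-βH} dλ. Then for every probability measure P absolutely continuous with respect to λ with finite relative entropy, F_β(H) ≤ ∫ H dP + β^{-1} Ent(P | λ), with equality iff dP = e^{-βH} dλ / ∫ e^{-βH} dλ (Gibbs variational principle). -/

import Mathlib

open MeasureTheory Real

lemma aux_sub_one_le (t : ℝ) (ht : 0 ≤ t) : t - 1 ≤ t * Real.log t := by
  rcases eq_or_lt_of_le ht with h | h
  · simp [← h]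
  · have h1 : Real.log t⁻¹ ≤ t⁻¹ - 1 := Real.log_le_sub_one_of_pos (by positivity)
    rw [Real.log_inv] at h1
    have := mul_le_mul_of_nonneg_left (by linarith : 1 - t⁻¹ ≤ Real.log t) h.le
    calc t - 1 = t * (1 - t⁻¹) := by field_simp
    _ ≤ t * Real.log t := this

lemma aux_eq_one (t : ℝ) (ht : 0 ≤ t) (h : t * Real.log t - t + 1 = 0) : t = 1 := by
  rcases eq_or_lt_of_le ht with h0 | h0
  · exfalso; rw [← h0] at h; norm_num at h
  · by_contra hne
    have hti : t⁻¹ ≠ 1 := fun hh => hne (by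
      have : t = 1 := by field_simp at hh; linarith
      exact this)
    have h1 : Real.log t⁻¹ < t⁻¹ - 1 :=
      Real.log_lt_sub_one_of_pos (by positivity) hti
    rw [Real.log_inv] at h1
    have := mul_lt_mul_of_pos_left (by linarith : 1 - t⁻¹ < Real.log t) h0
    have ht' : t * (1 - t⁻¹) = t - 1 := by field_simp
    nlinarith

lemma gibbs_ineq {X : Type*} [MeasurableSpace X] (P μ : Measure X)
    [IsProbabilityMeasure P] [IsProbabilityMeasure μ] (h : P ≪ μ)
    (hint : Integrable (llr P μ) P) :
    0 ≤ ∫ x, llr P μ x ∂P ∧ (∫ x, llr P μ x ∂P = 0 ↔ P = μ) := by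
  set g : X → ℝ := fun x => (P.rnDeriv μ x).toReal with hg
  have hsmul : (fun x => g x • llr P μ x) = fun x => g x * Real.log (g x) := by
    funext x; simp [llr, smul_eq_mul, hg]
  have hchg : ∫ x, llr P μ x ∂P = ∫ x, g x * Real.log (g x) ∂μ := by
    rw [← integral_rnDeriv_smul h (f := llr P μ)]
    exact congrArg (fun f => ∫ x, f x ∂μ) hsmul
  have hgint : Integrable (fun x => g x * Real.log (g x)) μ := by
    have := (integrable_rnDeriv_smul_iff h (f := llr P μ)).mpr hint
    rwa [hsmul] at this
  have hg1 : ∫ x, g x ∂μ = 1 := by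
    rw [hg, Measure.integral_toReal_rnDeriv h]; simp
  have hgI : Integrable g μ := Measure.integrable_toReal_rnDeriv
  have hsub : Integrable (fun x => g x * Real.log (g x) - g x) μ := hgint.sub hgI
  have hφint : Integrable (fun x => g x * Real.log (g x) - g x + 1) μ :=
    hsub.add (integrable_const 1)
  have hφnn : ∀ x, 0 ≤ g x * Real.log (g x) - g x + 1 := fun x => by
    have := aux_sub_one_le (g x) ENNReal.toReal_nonneg; linarith
  have hφ : ∫ x, (g x * Real.log (g x) - g x + 1) ∂μ = ∫ x, g x * Real.log (g x) ∂μ := by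
    rw [integral_add hsub (integrable_const 1), integral_sub hgint hgI, hg1]
    simp
  constructor
  · rw [hchg, ← hφ]
    exact integral_nonneg hφnn
  · constructor
    · intro h0
      rw [hchg] at h0
      have hzero : ∫ x, (g x * Real.log (g x) - g x + 1) ∂μ = 0 := by rw [hφ, h0]
      have hae : (fun x => g x * Real.log (g x) - g x + 1) =ᵐ[μ] 0 :=
        (integral_eq_zero_iff_of_nonneg (fun x => hφnn x) hφint).mp hzero
      have hg1ae : ∀ᵐ x ∂μ, P.rnDeriv μ x = 1 := by
        filter_upwards [hae] with x hx
        have : g x = 1 := aux_eq_one (g x) ENNReal.toReal_nonneg hx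
        rwa [hg, ENNReal.toReal_eq_one_iff] at this
      calc P = μ.withDensity (P.rnDeriv μ) := (Measure.withDensity_rnDeriv_eq P μ h).symm
      _ = μ.withDensity 1 := withDensity_congr_ae hg1ae
      _ = μ := by simp
    · rintro rfl
      have : llr P P =ᵐ[P] 0 := by
        filter_upwards [Measure.rnDeriv_self P] with x hx
        simp [llr, hx]
      rw [integral_congr_ae this]; simp

/-- The relative entropy `Ent(P | λ) = ∫ (dP/dλ) log(dP/dλ) dλ`. -/
noncomputable def relEnt {X : Type*} [MeasurableSpace X] (P lam : Measure X) : ℝ :=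
  ∫ x, (P.rnDeriv lam x).toReal * Real.log (P.rnDeriv lam x).toReal ∂lam

/-- Gibbs variational principle: `F_β(H) = -β⁻¹ log ∫ e^{-βH} dλ` satisfies
`F_β(H) ≤ ∫ H dP + β⁻¹ Ent(P | λ)` for every probability measure `P ≪ λ` with finite
relative entropy, with equality iff `P` is the Gibbs measure `e^{-βH} dλ / Z`. -/
theorem gibbs_variational_principle
    {X : Type*} [MeasurableSpace X]
    (lam : Measure X) [IsProbabilityMeasure lam]
    (β : ℝ) (hβ : 0 < β) (H : X → ℝ) (hHmeas : Measurable H)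
    (hexp : Integrable (fun x => Real.exp (-β * H x)) lam)
    (P : Measure X) [IsProbabilityMeasure P] (hac : P ≪ lam)
    (hent : Integrable
      (fun x => (P.rnDeriv lam x).toReal * Real.log (P.rnDeriv lam x).toReal) lam)
    (hHP : Integrable H P) :
    -β⁻¹ * Real.log (∫ x, Real.exp (-β * H x) ∂lam) ≤
        (∫ x, H x ∂P) + β⁻¹ * relEnt P lam ∧
      (-β⁻¹ * Real.log (∫ x, Real.exp (-β * H x) ∂lam) =
          (∫ x, H x ∂P) + β⁻¹ * relEnt P lam ↔
        P = (ENNReal.ofReal (∫ x, Real.exp (-β * H x) ∂lam))⁻¹ •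
          lam.withDensity (fun x => ENNReal.ofReal (Real.exp (-β * H x)))) := by
  have hβ' : β ≠ 0 := hβ.ne'
  set f : X → ℝ := fun x => -β * H x with hf
  set Z : ℝ := ∫ x, Real.exp (f x) ∂lam with hZ
  have hZpos : 0 < Z := integral_exp_pos hexp
  set μ : Measure X := lam.tilted f with hμ
  haveI : IsProbabilityMeasure μ := isProbabilityMeasure_tilted hexp
  have hPμ : P ≪ μ := hac.trans (absolutelyContinuous_tilted hexp)
  -- integrability of llr P lam w.r.t. P
  have hsmul : (fun x => (P.rnDeriv lam x).toReal • llr P lam x) =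
      fun x => (P.rnDeriv lam x).toReal * Real.log (P.rnDeriv lam x).toReal := by
    funext x; simp [llr, smul_eq_mul]
  have hllr_int : Integrable (llr P lam) P := by
    rw [← integrable_rnDeriv_smul_iff hac, hsmul]
    exact hent
  have hrelEnt : relEnt P lam = ∫ x, llr P lam x ∂P := by
    rw [relEnt, ← integral_rnDeriv_smul hac (f := llr P lam)]
    exact (congrArg (fun g => ∫ x, g x ∂lam) hsmul).symm
  have hfP : Integrable f P := hHP.const_mul (-β)
  have hμint : Integrable (llr P μ) P :=
    integrable_llr_tilted_right hac hfP hllr_int hexp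
  have hfint : ∫ x, f x ∂P = -β * ∫ x, H x ∂P := by
    rw [hf]; exact integral_const_mul (-β) H
  have hD : ∫ x, llr P μ x ∂P =
      relEnt P lam + β * ∫ x, H x ∂P + Real.log Z := by
    rw [hμ, integral_llr_tilted_right hac hfP hexp hllr_int, hfint, hrelEnt]
    ring
  obtain ⟨hnn, heq⟩ := gibbs_ineq P μ hPμ hμint
  -- the Gibbs measure equals the tilted measure
  have hfmeas : Measurable f := (hHmeas.const_mul (-β))
  have hg : Measurable fun x => ENNReal.ofReal (rexp (f x)) := hfmeas.exp.ennreal_ofReal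
  have hμG : μ = (ENNReal.ofReal Z)⁻¹ •
      lam.withDensity (fun x => ENNReal.ofReal (Real.exp (f x))) := by
    rw [hμ, Measure.tilted, ← hZ, ← withDensity_smul _ hg]
    congr 1
    funext x
    simp only [Pi.smul_apply, smul_eq_mul]
    rw [ENNReal.ofReal_div_of_pos hZpos, ENNReal.div_eq_inv_mul]
  have hμG' : P = μ ↔ P = (ENNReal.ofReal Z)⁻¹ •
      lam.withDensity (fun x => ENNReal.ofReal (Real.exp (-β * H x))) := by
    rw [hμG]
  rw [hD] at hnn heq
  have e1 : β * (-β⁻¹ * Real.log Z) = -Real.log Z := by field_simp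
  have e2 : β * ((∫ x, H x ∂P) + β⁻¹ * relEnt P lam) =
      β * (∫ x, H x ∂P) + relEnt P lam := by field_simp
  have key : 0 ≤ β⁻¹ * (relEnt P lam + β * (∫ x, H x ∂P) + Real.log Z) :=
    mul_nonneg (inv_pos.mpr hβ).le hnn
  have expand : β⁻¹ * (relEnt P lam + β * (∫ x, H x ∂P) + Real.log Z) =
      β⁻¹ * relEnt P lam + (∫ x, H x ∂P) + β⁻¹ * Real.log Z := by
    field_simp
  rw [expand] at key
  refine ⟨by linarith, ?_⟩
  have hiff : (-β⁻¹ * Real.log Z = (∫ x, H x ∂P) + β⁻¹ * relEnt P lam) ↔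
      relEnt P lam + β * (∫ x, H x ∂P) + Real.log Z = 0 := by
    constructor
    · intro h
      have := congrArg (fun t => β * t) h
      rw [e1, e2] at this
      linarith
    · intro h
      have h3 : β * (-β⁻¹ * Real.log Z) =
          β * ((∫ x, H x ∂P) + β⁻¹ * relEnt P lam) := by
        rw [e1, e2]; linarith
      exact mul_left_cancel₀ hβ' h3
  exact hiff.trans (heq.trans hμG')
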